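/- Let a be a finite-dimensional nilpotent associative algebra over F_q, G = 1 + a, λ ∈ a*, and let g^λ = {x ∈ a | λ(xy − yx) = 0 for all y ∈ a}. Then the stabilizer of λ under the coadjoint action of G equals 1 + g^λ, and the cardinality of the coadjoint orbit of λ equals q^(dim a − dim g^λ). -/

import Mathlib

open Unitization Module

variable {F : Type*} [Field F] [Fintype F]
  (a : Type*) [NonUnitalRing a] [Module F a] [SMulCommClass F a a] [IsScalarTower F a a]

/-- The coadjoint action `(Ad*(g)λ)(x) = λ(g⁻¹ x g)`. -/
noncomputable def coAd (g : (Unitization F a)ˣ) (l : Module.Dual F a) : Module.Dual F a :=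
  l ∘ₗ (sndHom F F a) ∘ₗ (LinearMap.mulRight F ((g : Unitization F a))) ∘ₗ
    (LinearMap.mulLeft F (((g⁻¹ : (Unitization F a)ˣ) : Unitization F a))) ∘ₗ (inrHom F F a)

set_option linter.unusedSectionVars false

lemma coAd_apply (g : (Unitization F a)ˣ) (l : Module.Dual F a) (v : a) :
    coAd a g l v = l ((((g⁻¹ : (Unitization F a)ˣ) : Unitization F a) * inr v * (g : Unitization F a)).snd) := rfl

lemma inr_snd_of_fst_eq_zero {p : Unitization F a} (h : p.fst = 0) : (inr (p.snd) : Unitization F a) = p := by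
  conv_rhs => rw [← inl_fst_add_inr_snd_eq p]
  rw [h, inl_zero, zero_add]

def unitSubgroup : Subgroup (Unitization F a)ˣ where
  carrier := {g | (g : Unitization F a).fst = 1}
  one_mem' := by simp
  mul_mem' {g h} hg hh := by
    simp only [Set.mem_setOf_eq, Units.val_mul, fst_mul] at *
    rw [hg, hh, mul_one]
  inv_mem' {g} hg := by
    simp only [Set.mem_setOf_eq] at *
    have h1 : (((g⁻¹ : (Unitization F a)ˣ) : Unitization F a) * (g : Unitization F a)).fst = 1 := by
      rw [g.inv_mul]; simp
    rwa [fst_mul, hg, mul_one] at h1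

noncomputable def coAdAction : MulAction (Unitization F a)ˣ (Module.Dual F a) where
  smul g l := coAd a g l
  one_smul l := by
    show coAd a 1 l = l
    ext v
    simp [coAd_apply]
  mul_smul g h l := by
    show coAd a (g * h) l = coAd a g (coAd a h l)
    ext v
    rw [coAd_apply, coAd_apply, coAd_apply]
    have hfst : (((g⁻¹ : (Unitization F a)ˣ) : Unitization F a) * inr v * (g : Unitization F a)).fst = 0 := by
      simp [fst_mul]
    rw [inr_snd_of_fst_eq_zero a hfst]
    congr 1
    simp [mul_assoc, mul_inv_rev, Units.val_mul]

lemma fst_inv_eq_one (g : (Unitization F a)ˣ) (hg : (g : Unitization F a).fst = 1) :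
    ((g⁻¹ : (Unitization F a)ˣ) : Unitization F a).fst = 1 := by
  have h1 : (((g⁻¹ : (Unitization F a)ˣ) : Unitization F a) * (g : Unitization F a)).fst = 1 := by
    rw [g.inv_mul]; simp
  rwa [fst_mul, hg, mul_one] at h1

lemma coAd_fixed_iff (g : (Unitization F a)ˣ) (hg : (g : Unitization F a).fst = 1)
    (lam : Module.Dual F a) :
    coAd a g lam = lam ↔
      ∀ v : a, lam (v * (g : Unitization F a).snd - (g : Unitization F a).snd * v) = 0 := by
  have hginv := fst_inv_eq_one a g hg
  set x := (g : Unitization F a).snd with hx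
  set u := ((g⁻¹ : (Unitization F a)ˣ) : Unitization F a).snd with hu
  have rel1 : u + x + u * x = 0 := by
    have h1 : (((g⁻¹ : (Unitization F a)ˣ) : Unitization F a) * (g : Unitization F a)).snd
        = (1 : Unitization F a).snd := by rw [g.inv_mul]
    rw [snd_mul, hg, hginv, snd_one, one_smul, one_smul] at h1
    rw [← h1]; abel
  have rel2 : u + x + x * u = 0 := by
    have h1 : ((g : Unitization F a) * ((g⁻¹ : (Unitization F a)ˣ) : Unitization F a)).snd
        = (1 : Unitization F a).snd := by rw [g.mul_inv]
    rw [snd_mul, hg, hginv, snd_one, one_smul, one_smul] at h1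
    exact h1
  have hC : ∀ v : a, coAd a g lam v = lam (v + u * v + (v * x + u * v * x)) := by
    intro v
    rw [coAd_apply]
    congr 1
    rw [snd_mul, snd_mul, fst_mul, hg, hginv, fst_inr, snd_inr, mul_zero, zero_smul,
      one_smul, one_smul, zero_smul, zero_add, add_zero]
    noncomm_ring
  constructor
  · intro h v
    have hCv := hC (v + x * v)
    rw [LinearMap.ext_iff.mp h (v + x * v)] at hCv
    have idt : (v + x * v) + u * (v + x * v) + ((v + x * v) * x + u * (v + x * v) * x)
        = ((v + x * v) + (v * x - x * v)) + ((u + x + u * x) * v + (u + x + u * x) * (v * x)) := by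
      noncomm_ring
    rw [idt, rel1, zero_mul, zero_mul, add_zero, add_zero] at hCv
    simp only [map_add] at hCv
    exact add_eq_left.mp hCv.symm
  · intro hT
    ext v
    rw [hC]
    have h1 := hT v
    have h2 := hT (u * v)
    have idt2 : v + u * v + (v * x + u * v * x)
        = v + ((u + x + x * u) * v + ((v * x - x * v) + (u * v * x - x * (u * v)))) := by
      noncomm_ring
    rw [idt2, rel2, zero_mul, zero_add]
    simp [h1, h2]

lemma fst_eq_one_iff (g : (Unitization F a)ˣ) :
    (∃ x : a, (g : Unitization F a) = 1 + inr x) ↔ (g : Unitization F a).fst = 1 := by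
  constructor
  · rintro ⟨x, hx⟩
    rw [hx]
    simp
  · intro hg
    refine ⟨(g : Unitization F a).snd, ?_⟩
    conv_lhs => rw [← inl_fst_add_inr_snd_eq (g : Unitization F a)]
    rw [hg, inl_one]

lemma stab_iff (lam : Module.Dual F a) (glam : Submodule F a)
    (hglam : ∀ x : a, x ∈ glam ↔ ∀ y : a, lam (x * y - y * x) = 0)
    (g : (Unitization F a)ˣ) (hgx : ∃ x : a, (g : Unitization F a) = 1 + inr x) :
    coAd a g lam = lam ↔ ∃ z ∈ glam, (g : Unitization F a) = 1 + inr z := by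
  obtain ⟨x, hx⟩ := hgx
  have hg1 : (g : Unitization F a).fst = 1 := (fst_eq_one_iff a g).mp ⟨x, hx⟩
  have hsnd : (g : Unitization F a).snd = x := by rw [hx]; simp
  rw [coAd_fixed_iff a g hg1 lam, hsnd]
  constructor
  · intro h
    refine ⟨x, (hglam x).mpr fun y => ?_, hx⟩
    have hy := h y
    rw [show x * y - y * x = -(y * x - x * y) from (neg_sub _ _).symm, map_neg, hy, neg_zero]
  · rintro ⟨z, hz, hz2⟩ v
    have hzx : z = x := inr_injective (R := F) (add_left_cancel (hz2.symm.trans hx))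
    subst hzx
    have hv := (hglam z).mp hz v
    rw [show v * z - z * v = -(z * v - v * z) from (neg_sub _ _).symm, map_neg, hv, neg_zero]

lemma isUnit_one_add_inr
    (hnil : ∃ n : ℕ, 0 < n ∧ ∀ f : Fin n → a,
      (List.ofFn (fun i => (inr (f i) : Unitization F a))).prod = 0)
    (x : a) : IsUnit (1 + inr x : Unitization F a) := by
  obtain ⟨n, hn, hN⟩ := hnil
  have hx : IsNilpotent (inr x : Unitization F a) := by
    refine ⟨n, ?_⟩
    have h1 := hN (fun _ => x)
    rwa [List.ofFn_const, List.prod_replicate] at h1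
  exact hx.isUnit_one_add

lemma one_add_snd (g : (Unitization F a)ˣ) (hg : (g : Unitization F a).fst = 1) :
    (g : Unitization F a) = 1 + inr ((g : Unitization F a).snd) := by
  conv_lhs => rw [← inl_fst_add_inr_snd_eq (g : Unitization F a)]
  rw [hg, inl_one]

lemma mem_unitSubgroup (g : (Unitization F a)ˣ) :
    g ∈ unitSubgroup a ↔ (g : Unitization F a).fst = 1 := Iff.rfl


lemma orbit_card [FiniteDimensional F a]
    (hnil : ∃ n : ℕ, 0 < n ∧ ∀ f : Fin n → a,
      (List.ofFn (fun i => (inr (f i) : Unitization F a))).prod = 0)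
    (lam : Module.Dual F a) (glam : Submodule F a)
    (hglam : ∀ x : a, x ∈ glam ↔ ∀ y : a, lam (x * y - y * x) = 0) :
    Nat.card {mu : Module.Dual F a |
        ∃ g : (Unitization F a)ˣ, (∃ x : a, (g : Unitization F a) = 1 + inr x) ∧
          coAd a g lam = mu}
      = Fintype.card F ^ (finrank F a - finrank F glam) := by
  classical
  letI actInst : MulAction (Unitization F a)ˣ (Module.Dual F a) := coAdAction a
  have hsmul : ∀ (g : ↥(unitSubgroup (F := F) a)) (l : Module.Dual F a),
      g • l = coAd a ((g : (Unitization F a)ˣ)) l := fun _ _ => rfl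
  have hmem1 : ∀ g : ↥(unitSubgroup (F := F) a),
      ((g : (Unitization F a)ˣ) : Unitization F a).fst = 1 := fun g => g.2
  -- the orbit set
  have hset : {mu : Module.Dual F a |
        ∃ g : (Unitization F a)ˣ, (∃ x : a, (g : Unitization F a) = 1 + inr x) ∧
          coAd a g lam = mu} = MulAction.orbit ↥(unitSubgroup (F := F) a) lam := by
    ext mu
    simp only [Set.mem_setOf_eq, MulAction.mem_orbit_iff]
    constructor
    · rintro ⟨g, hg, h2⟩
      exact ⟨⟨g, (fst_eq_one_iff a g).mp hg⟩, by rw [hsmul]; exact h2⟩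
    · rintro ⟨g, h2⟩
      refine ⟨(g : (Unitization F a)ˣ), (fst_eq_one_iff a _).mpr (hmem1 g), ?_⟩
      rw [hsmul] at h2; exact h2
  haveI : Finite a := Module.finite_of_finite F
  haveI : Finite (Unitization F a) := Finite.of_equiv _ (Unitization.equiv (R := F) (A := a)).symm
  haveI : Fintype a := Fintype.ofFinite a
  haveI : Fintype ↥glam := Fintype.ofFinite ↥glam
  -- card of the unit subgroup
  have eH : ↥(unitSubgroup (F := F) a) ≃ a := {
    toFun := fun g => ((g : (Unitization F a)ˣ) : Unitization F a).snd
    invFun := fun x => ⟨(isUnit_one_add_inr a hnil x).unit, by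
      rw [mem_unitSubgroup, IsUnit.unit_spec]; simp⟩
    left_inv := fun g => by
      apply Subtype.ext; apply Units.ext
      rw [IsUnit.unit_spec]
      exact (one_add_snd a (g : (Unitization F a)ˣ) (hmem1 g)).symm
    right_inv := fun x => by
      simp only [IsUnit.unit_spec]
      simp }
  have hcardH : Nat.card ↥(unitSubgroup (F := F) a) = Fintype.card F ^ finrank F a := by
    rw [Nat.card_congr eH, Nat.card_eq_fintype_card, card_eq_pow_finrank (K := F) (V := a)]
  -- stabilizer membership
  have hstabmem : ∀ g : ↥(unitSubgroup (F := F) a),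
      g ∈ MulAction.stabilizer ↥(unitSubgroup (F := F) a) lam ↔
      ((g : (Unitization F a)ˣ) : Unitization F a).snd ∈ glam := by
    intro g
    rw [MulAction.mem_stabilizer_iff, hsmul,
      stab_iff a lam glam hglam (g : (Unitization F a)ˣ)
        ((fst_eq_one_iff a (g : (Unitization F a)ˣ)).mpr (hmem1 g))]
    constructor
    · rintro ⟨z, hz, hz2⟩
      have hz3 : z = ((g : (Unitization F a)ˣ) : Unitization F a).snd := by rw [hz2]; simp
      rwa [← hz3]
    · intro h
      exact ⟨_, h, one_add_snd a (g : (Unitization F a)ˣ) (hmem1 g)⟩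
  have eS : ↥(MulAction.stabilizer ↥(unitSubgroup (F := F) a) lam) ≃ ↥glam := {
    toFun := fun g =>
      ⟨(((g : ↥(unitSubgroup (F := F) a)) : (Unitization F a)ˣ) : Unitization F a).snd,
        (hstabmem (g : ↥(unitSubgroup (F := F) a))).mp g.2⟩
    invFun := fun z => ⟨⟨(isUnit_one_add_inr a hnil (z : a)).unit, by
        rw [mem_unitSubgroup, IsUnit.unit_spec]; simp⟩, by
      rw [hstabmem]
      simp only [IsUnit.unit_spec]
      simpa using z.2⟩
    left_inv := fun g => by
      apply Subtype.ext; apply Subtype.ext; apply Units.ext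
      rw [IsUnit.unit_spec]
      exact (one_add_snd a ((g : ↥(unitSubgroup (F := F) a)) : (Unitization F a)ˣ)
        (hmem1 (g : ↥(unitSubgroup (F := F) a)))).symm
    right_inv := fun z => by
      apply Subtype.ext
      simp only [IsUnit.unit_spec]
      simp }
  have hcardS : Nat.card ↥(MulAction.stabilizer ↥(unitSubgroup (F := F) a) lam)
      = Fintype.card F ^ finrank F glam := by
    rw [Nat.card_congr eS, Nat.card_eq_fintype_card, card_eq_pow_finrank (K := F) (V := ↥glam)]
  have horb : Nat.card {mu : Module.Dual F a |
        ∃ g : (Unitization F a)ˣ, (∃ x : a, (g : Unitization F a) = 1 + inr x) ∧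
          coAd a g lam = mu}
      = Nat.card (↥(unitSubgroup (F := F) a) ⧸ MulAction.stabilizer ↥(unitSubgroup (F := F) a) lam) := by
    rw [hset]
    exact Nat.card_congr (MulAction.orbitEquivQuotientStabilizer ↥(unitSubgroup (F := F) a) lam)
  have hos := Subgroup.card_eq_card_quotient_mul_card_subgroup
    (MulAction.stabilizer ↥(unitSubgroup (F := F) a) lam)
  rw [hcardH, hcardS] at hos
  have hle : finrank F glam ≤ finrank F a := Submodule.finrank_le glam
  have hq : 0 < Fintype.card F := Fintype.card_pos
  have hos2 : Fintype.card F ^ (finrank F a - finrank F glam) * Fintype.card F ^ finrank F glam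
      = Nat.card (↥(unitSubgroup (F := F) a) ⧸ MulAction.stabilizer ↥(unitSubgroup (F := F) a) lam)
        * Fintype.card F ^ finrank F glam := by
    rw [← hos, ← pow_add, Nat.sub_add_cancel hle]
  rw [horb]
  exact (Nat.eq_of_mul_eq_mul_right (pow_pos hq _) hos2).symm

/-- For a finite-dimensional nilpotent associative algebra `a` over `F_q`, `G = 1 + a`,
`λ ∈ a*`, and `g^λ = {x | λ(xy − yx) = 0 ∀ y}`: the stabilizer of `λ` under the coadjoint
action is `1 + g^λ`, and the coadjoint orbit of `λ` has cardinality
`q^(dim a − dim g^λ)`. -/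
theorem stmt7 [FiniteDimensional F a]
    (hnil : ∃ n : ℕ, 0 < n ∧ ∀ f : Fin n → a,
      (List.ofFn (fun i => (inr (f i) : Unitization F a))).prod = 0)
    (lam : Module.Dual F a)
    (glam : Submodule F a)
    (hglam : ∀ x : a, x ∈ glam ↔ ∀ y : a, lam (x * y - y * x) = 0) :
    (∀ g : (Unitization F a)ˣ, (∃ x : a, (g : Unitization F a) = 1 + inr x) →
      (coAd a g lam = lam ↔ ∃ z ∈ glam, (g : Unitization F a) = 1 + inr z)) ∧
    Nat.card {mu : Module.Dual F a |
        ∃ g : (Unitization F a)ˣ, (∃ x : a, (g : Unitization F a) = 1 + inr x) ∧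
          coAd a g lam = mu}
      = Fintype.card F ^ (finrank F a - finrank F glam) := by
  constructor
  · exact fun g hg => stab_iff a lam glam hglam g hg
  · exact orbit_card a hnil lam glam hglam
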